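/- Let q be a prime power and m > k ≥ 1 positive integers. Then ∑_{i=0}^{m+k−1} ⌈(q−1)(q^{m+k−1} − q^{m−1} − q^{k−1})/q^i⌉ = q^{m+k} − q^m − q^k + 1, i.e., the [q^{m+k} − q^m − q^k + 1, m+k, (q−1)(q^{m+k−1} − q^{m−1} − q^{k−1})] code meets the Griesmer bound with equality. -/

import Mathlib

open Finset

private lemma geom_nat (q : ℕ) (hq : 2 ≤ q) (n : ℕ) :
    (q - 1) * ∑ j ∈ Finset.range n, q ^ j = q ^ n - 1 := by
  induction n with
  | zero => simp
  | succ n ih =>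
    rw [Finset.sum_range_succ, Nat.mul_add, ih]
    have h1 : 1 ≤ q ^ n := Nat.one_le_pow _ _ (by omega)
    have h3 : (q - 1) * q ^ n = q ^ n * q - q ^ n := by
      rw [Nat.sub_mul, one_mul, mul_comm]
    have h4 : q ^ (n + 1) = q ^ n * q := pow_succ q n
    have h5 : q ^ n ≤ q ^ n * q := Nat.le_mul_of_pos_right _ (by omega)
    rw [h3, h4]
    omega

private lemma reg1 (q m k i : ℕ) (hq2 : 2 ≤ q) (hk : 1 ≤ k) (hmk : k < m) (hi : i < k) :
    ((q - 1) * (q ^ (m + k - 1) - q ^ (m - 1) - q ^ (k - 1)) + q ^ i - 1) / q ^ i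
      = q ^ (k - 1 - i) * ((q - 1) * (q ^ m - q ^ (m - k) - 1)) := by
  have hpi : 0 < q ^ i := Nat.pow_pos (by omega)
  have e1 : q ^ i * q ^ (k - 1 - i) = q ^ (k - 1) := by
    rw [← pow_add]; congr 1; omega
  have ea : k - 1 + m = m + k - 1 := by omega
  have eb : k - 1 + (m - k) = m - 1 := by omega
  have e2 : q ^ (k - 1) * (q ^ m - q ^ (m - k) - 1) = q ^ (m + k - 1) - q ^ (m - 1) - q ^ (k - 1) := by
    rw [Nat.mul_sub, Nat.mul_sub, mul_one, ← pow_add, ← pow_add, ea, eb]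
  have key : (q - 1) * (q ^ (m + k - 1) - q ^ (m - 1) - q ^ (k - 1))
      = q ^ i * (q ^ (k - 1 - i) * ((q - 1) * (q ^ m - q ^ (m - k) - 1))) := by
    rw [← mul_assoc, e1, mul_left_comm, e2]
  rw [key, Nat.add_sub_assoc hpi, Nat.mul_add_div hpi,
    Nat.div_eq_of_lt (by omega), Nat.add_zero]

private lemma reg2 (q m k i : ℕ) (hq2 : 2 ≤ q) (hk : 1 ≤ k) (hmk : k < m)
    (hik : k ≤ i) (him : i < m) :
    ((q - 1) * (q ^ (m + k - 1) - q ^ (m - 1) - q ^ (k - 1)) + q ^ i - 1) / q ^ i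
      = q ^ (m - 1 - i) * ((q - 1) * (q ^ k - 1)) := by
  have hpi : 0 < q ^ i := Nat.pow_pos (by omega)
  have e1 : q ^ (m - 1 - i) * q ^ i = q ^ (m - 1) := by rw [← pow_add]; congr 1; omega
  have ea : m - 1 + k = m + k - 1 := by omega
  have e2 : q ^ (m - 1) * (q ^ k - 1) = q ^ (m + k - 1) - q ^ (m - 1) := by
    rw [Nat.mul_sub, mul_one, ← pow_add, ea]
  have hsub1 : q ^ (m - 1) ≤ q ^ (m + k - 1) := Nat.pow_le_pow_right (by omega) (by omega)
  have hsub2 : q ^ (k - 1) ≤ q ^ (m + k - 1) - q ^ (m - 1) := by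
    have h1 : q ^ (k - 1) ≤ q ^ (m - 1) := Nat.pow_le_pow_right (by omega) (by omega)
    have h2 : 2 * q ^ (m - 1) ≤ q * q ^ (m - 1) :=
      Nat.mul_le_mul_right _ (by omega)
    have h3 : q * q ^ (m - 1) = q ^ m := by rw [← pow_succ']; congr 1; omega
    have h4 : q ^ m ≤ q ^ (m + k - 1) := Nat.pow_le_pow_right (by omega) (by omega)
    omega
  have eT : q ^ (m - 1 - i) * ((q - 1) * (q ^ k - 1)) * q ^ i
      = (q - 1) * (q ^ (m + k - 1) - q ^ (m - 1)) := by
    calc q ^ (m - 1 - i) * ((q - 1) * (q ^ k - 1)) * q ^ i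
        = (q ^ (m - 1 - i) * q ^ i) * ((q - 1) * (q ^ k - 1)) := by ring
      _ = (q - 1) * (q ^ (m - 1) * (q ^ k - 1)) := by rw [e1]; ring
      _ = (q - 1) * (q ^ (m + k - 1) - q ^ (m - 1)) := by rw [e2]
  have hq1 : (q - 1) * q ^ (k - 1) ≤ (q - 1) * (q ^ (m + k - 1) - q ^ (m - 1)) :=
    Nat.mul_le_mul_left _ hsub2
  have key : (q - 1) * (q ^ (m + k - 1) - q ^ (m - 1) - q ^ (k - 1)) + (q - 1) * q ^ (k - 1)
      = q ^ (m - 1 - i) * ((q - 1) * (q ^ k - 1)) * q ^ i := by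
    rw [eT, Nat.mul_sub (q - 1) (q ^ (m + k - 1) - q ^ (m - 1)) (q ^ (k - 1))]
    omega
  have he1 : 1 ≤ (q - 1) * q ^ (k - 1) :=
    Nat.mul_pos (by omega) (Nat.pow_pos (by omega))
  have he2 : (q - 1) * q ^ (k - 1) < q ^ i := by
    have h1 : (q - 1) * q ^ (k - 1) < q * q ^ (k - 1) :=
      (Nat.mul_lt_mul_right (Nat.pow_pos (show 0 < q by omega))).2 (by omega)
    have h2 : q * q ^ (k - 1) = q ^ k := by rw [← pow_succ']; congr 1; omega
    have h3 : q ^ k ≤ q ^ i := Nat.pow_le_pow_right (by omega) hik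
    omega
  apply Nat.div_eq_of_lt_le
  · rw [← key]; omega
  · rw [add_mul, one_mul, ← key]; omega

private lemma reg3 (q m k i : ℕ) (hq2 : 2 ≤ q) (hk : 1 ≤ k) (hmk : k < m)
    (him : m ≤ i) (hi : i < m + k) :
    ((q - 1) * (q ^ (m + k - 1) - q ^ (m - 1) - q ^ (k - 1)) + q ^ i - 1) / q ^ i
      = (q - 1) * q ^ (m + k - 1 - i) := by
  have hpi : 0 < q ^ i := Nat.pow_pos (by omega)
  have e1 : q ^ (m + k - 1 - i) * q ^ i = q ^ (m + k - 1) := by rw [← pow_add]; congr 1; omega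
  have hsub1 : q ^ (m - 1) ≤ q ^ (m + k - 1) := Nat.pow_le_pow_right (by omega) (by omega)
  have hsub2 : q ^ (k - 1) ≤ q ^ (m + k - 1) - q ^ (m - 1) := by
    have h1 : q ^ (k - 1) ≤ q ^ (m - 1) := Nat.pow_le_pow_right (by omega) (by omega)
    have h2 : 2 * q ^ (m - 1) ≤ q * q ^ (m - 1) := Nat.mul_le_mul_right _ (by omega)
    have h3 : q * q ^ (m - 1) = q ^ m := by rw [← pow_succ']; congr 1; omega
    have h4 : q ^ m ≤ q ^ (m + k - 1) := Nat.pow_le_pow_right (by omega) (by omega)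
    omega
  have eT : (q - 1) * q ^ (m + k - 1 - i) * q ^ i = (q - 1) * q ^ (m + k - 1) := by
    rw [mul_assoc, e1]
  have hq1 : (q - 1) * q ^ (k - 1) ≤ (q - 1) * (q ^ (m + k - 1) - q ^ (m - 1)) :=
    Nat.mul_le_mul_left _ hsub2
  have hq2' : (q - 1) * q ^ (m - 1) ≤ (q - 1) * q ^ (m + k - 1) := Nat.mul_le_mul_left _ hsub1
  have hA : (q - 1) * q ^ (m - 1) + (q - 1) * q ^ (k - 1) ≤ (q - 1) * q ^ (m + k - 1) := by
    rw [← Nat.mul_add]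
    exact Nat.mul_le_mul_left _ (by omega)
  have key : (q - 1) * (q ^ (m + k - 1) - q ^ (m - 1) - q ^ (k - 1))
        + ((q - 1) * q ^ (m - 1) + (q - 1) * q ^ (k - 1))
      = (q - 1) * q ^ (m + k - 1 - i) * q ^ i := by
    rw [eT, Nat.mul_sub (q - 1) (q ^ (m + k - 1) - q ^ (m - 1)) (q ^ (k - 1)),
      Nat.mul_sub (q - 1) (q ^ (m + k - 1)) (q ^ (m - 1))]
    omega
  have he1 : 1 ≤ (q - 1) * q ^ (m - 1) + (q - 1) * q ^ (k - 1) := by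
    have : 0 < (q - 1) * q ^ (m - 1) := Nat.mul_pos (by omega) (Nat.pow_pos (by omega))
    omega
  have he2 : (q - 1) * q ^ (m - 1) + (q - 1) * q ^ (k - 1) < q ^ i := by
    have a1 : (q - 1) * q ^ (m - 1) = q ^ m - q ^ (m - 1) := by
      rw [Nat.sub_mul, one_mul, ← pow_succ']; congr 2; omega
    have a2 : (q - 1) * q ^ (k - 1) = q ^ k - q ^ (k - 1) := by
      rw [Nat.sub_mul, one_mul, ← pow_succ']; congr 2; omega
    have b1 : q ^ k ≤ q ^ (m - 1) := Nat.pow_le_pow_right (by omega) (by omega)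
    have b2 : q ^ (m - 1) ≤ q ^ m := Nat.pow_le_pow_right (by omega) (by omega)
    have b3 : q ^ m ≤ q ^ i := Nat.pow_le_pow_right (by omega) him
    have b4 : 1 ≤ q ^ (k - 1) := Nat.one_le_pow _ _ (by omega)
    have b5 : 1 ≤ q ^ (m - 1) := Nat.one_le_pow _ _ (by omega)
    omega
  apply Nat.div_eq_of_lt_le
  · rw [← key]; omega
  · rw [add_mul, one_mul, ← key]; omega

set_option maxHeartbeats 1000000 in
theorem stmt_17 (q m k : ℕ) (hq : IsPrimePow q) (hk : 1 ≤ k) (hmk : k < m) :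
    ∑ i ∈ Finset.range (m + k),
        ((q - 1) * (q ^ (m + k - 1) - q ^ (m - 1) - q ^ (k - 1)) + q ^ i - 1) / q ^ i
      = q ^ (m + k) - q ^ m - q ^ k + 1 := by
  have hq2 : 2 ≤ q := hq.two_le
  rw [Finset.range_eq_Ico,
    ← Finset.sum_Ico_consecutive _ (Nat.zero_le k) (show k ≤ m + k by omega),
    ← Finset.sum_Ico_consecutive _ (show k ≤ m by omega) (show m ≤ m + k by omega)]
  have S1 : ∑ i ∈ Finset.Ico 0 k,
      ((q - 1) * (q ^ (m + k - 1) - q ^ (m - 1) - q ^ (k - 1)) + q ^ i - 1) / q ^ i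
      = (∑ j ∈ Finset.range k, q ^ j) * ((q - 1) * (q ^ m - q ^ (m - k) - 1)) := by
    rw [← Finset.range_eq_Ico, Finset.sum_mul]
    rw [← Finset.sum_range_reflect (fun j => q ^ j * ((q - 1) * (q ^ m - q ^ (m - k) - 1))) k]
    exact Finset.sum_congr rfl fun i hi => reg1 q m k i hq2 hk hmk (Finset.mem_range.1 hi)
  have S2 : ∑ i ∈ Finset.Ico k m,
      ((q - 1) * (q ^ (m + k - 1) - q ^ (m - 1) - q ^ (k - 1)) + q ^ i - 1) / q ^ i
      = (∑ j ∈ Finset.range (m - k), q ^ j) * ((q - 1) * (q ^ k - 1)) := by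
    rw [Finset.sum_Ico_eq_sum_range, Finset.sum_mul]
    rw [← Finset.sum_range_reflect (fun j => q ^ j * ((q - 1) * (q ^ k - 1))) (m - k)]
    refine Finset.sum_congr rfl fun i hi => ?_
    rw [Finset.mem_range] at hi
    have h := reg2 q m k (k + i) hq2 hk hmk (by omega) (by omega)
    rw [show m - 1 - (k + i) = m - k - 1 - i from by omega] at h
    exact h
  have S3 : ∑ i ∈ Finset.Ico m (m + k),
      ((q - 1) * (q ^ (m + k - 1) - q ^ (m - 1) - q ^ (k - 1)) + q ^ i - 1) / q ^ i
      = (q - 1) * ∑ j ∈ Finset.range k, q ^ j := by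
    rw [Finset.sum_Ico_eq_sum_range, Finset.mul_sum]
    rw [show m + k - m = k from by omega]
    rw [← Finset.sum_range_reflect (fun j => (q - 1) * q ^ j) k]
    refine Finset.sum_congr rfl fun i hi => ?_
    rw [Finset.mem_range] at hi
    have h := reg3 q m k (m + i) hq2 hk hmk (by omega) (by omega)
    rw [show m + k - 1 - (m + i) = k - 1 - i from by omega] at h
    exact h
  rw [S1, S2, S3]
  have g1 : (q - 1) * ∑ j ∈ Finset.range k, q ^ j = q ^ k - 1 := geom_nat q hq2 k
  have g2 : (q - 1) * ∑ j ∈ Finset.range (m - k), q ^ j = q ^ (m - k) - 1 := geom_nat q hq2 (m - k)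
  rw [show (∑ j ∈ Finset.range k, q ^ j) * ((q - 1) * (q ^ m - q ^ (m - k) - 1))
      = ((q - 1) * ∑ j ∈ Finset.range k, q ^ j) * (q ^ m - q ^ (m - k) - 1) from by ring,
    show (∑ j ∈ Finset.range (m - k), q ^ j) * ((q - 1) * (q ^ k - 1))
      = ((q - 1) * ∑ j ∈ Finset.range (m - k), q ^ j) * (q ^ k - 1) from by ring,
    g1, g2]
  have p1 : q ^ k * q ^ m = q ^ (m + k) := by rw [← pow_add]; congr 1; omega
  have p2 : q ^ k * q ^ (m - k) = q ^ m := by rw [← pow_add]; congr 1; omega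
  have b1 : 1 ≤ q ^ k := Nat.one_le_pow _ _ (by omega)
  have b2 : 1 ≤ q ^ (m - k) := Nat.one_le_pow _ _ (by omega)
  have hk2 : (2:ℕ) ≤ q ^ k := by
    calc 2 = 2 ^ 1 := rfl
    _ ≤ q ^ k := Nat.pow_le_pow_left hq2 1 |>.trans (Nat.pow_le_pow_right (by omega) hk)
  have b3 : q ^ (m - k) + 1 ≤ q ^ m := by
    calc q ^ (m - k) + 1 ≤ 2 * q ^ (m - k) := by omega
    _ ≤ q ^ k * q ^ (m - k) := Nat.mul_le_mul_right _ hk2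
    _ = q ^ m := p2
  have b4 : q ^ m + q ^ k ≤ q ^ (m + k) := by
    have h2 : q ^ k ≤ q ^ m := Nat.pow_le_pow_right (by omega) (by omega)
    calc q ^ m + q ^ k ≤ 2 * q ^ m := by omega
    _ ≤ q ^ k * q ^ m := Nat.mul_le_mul_right _ hk2
    _ = q ^ (m + k) := p1
  zify [b1, b2,
    show q ^ (m - k) ≤ q ^ m from by omega,
    show (1:ℕ) ≤ q ^ m - q ^ (m - k) from by omega,
    show q ^ m ≤ q ^ (m + k) from by omega,
    show q ^ k ≤ q ^ (m + k) - q ^ m from by omega]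
  have p1' : (q:ℤ) ^ k * q ^ m = q ^ (m + k) := by exact_mod_cast p1
  have p2' : (q:ℤ) ^ k * q ^ (m - k) = q ^ m := by exact_mod_cast p2
  linear_combination p1'
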